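/- Let K be a field and S = K[x_1, ..., x_n] the polynomial ring with n ≥ 2. There is no squarefree monomial ideal I ⊆ S such that the set of associated primes of S/I^s equals {(x_1), (x_2), (x_1, x_2)} for all sufficiently large s; that is, the set {(x_1), (x_2), (x_1, x_2)} is not Ass^∞(I) for any squarefree monomial ideal I. -/

import Mathlib

open MvPolynomial Pointwise

/-- A squarefree monomial ideal: an ideal generated by squarefree monomials,
that is, monomials in which each variable occurs with exponent at most 1. -/
def IsSquarefreeMonomialIdeal {K : Type*} [Field K] {n : ℕ}
    (I : Ideal (MvPolynomial (Fin n) K)) : Prop :=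
  ∃ A : Set (Fin n →₀ ℕ), (∀ a ∈ A, ∀ i, a i ≤ 1) ∧
    I = Ideal.span ((fun a => (monomial a (1 : K) : MvPolynomial (Fin n) K)) '' A)

namespace Stmt9Aux

variable {K : Type*} [Field K] {n : ℕ}

/-- Iterated sumset: `sumPow A t` is the set of sums of `t+1` elements of `A`. -/
def sumPow (A : Set (Fin n →₀ ℕ)) : ℕ → Set (Fin n →₀ ℕ)
  | 0 => A
  | (t+1) => Set.image2 (· + ·) (sumPow A t) A

lemma mul_image (A B : Set (Fin n →₀ ℕ)) :
    ((fun a => (monomial a (1 : K) : MvPolynomial (Fin n) K)) '' B) *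
      ((fun a => (monomial a (1 : K) : MvPolynomial (Fin n) K)) '' A)
    = (fun a => (monomial a (1 : K) : MvPolynomial (Fin n) K)) '' Set.image2 (· + ·) B A := by
  rw [← Set.image2_mul, Set.image2_image_left, Set.image2_image_right, Set.image_image2]
  refine Set.image2_congr' ?_
  intro a b
  rw [monomial_mul, one_mul]

lemma span_pow (A : Set (Fin n →₀ ℕ)) (t : ℕ) :
    (Ideal.span ((fun a => (monomial a (1 : K) : MvPolynomial (Fin n) K)) '' A)) ^ (t + 1)
      = Ideal.span ((fun a => (monomial a (1 : K) : MvPolynomial (Fin n) K)) '' sumPow A t) := by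
  induction t with
  | zero => rw [pow_one]; rfl
  | succ t ih =>
      rw [pow_succ, ih, Ideal.span_mul_span', mul_image]
      rfl

lemma sumPow_coord (A : Set (Fin n →₀ ℕ)) (i : Fin n) (hAi : ∀ a ∈ A, a i = 1) :
    ∀ t, ∀ b ∈ sumPow A t, b i = t + 1 := by
  intro t
  induction t with
  | zero => intro b hb; exact hAi b hb
  | succ t ih =>
      rintro b ⟨c, hc, a, ha, rfl⟩
      rw [Finsupp.add_apply, ih c hc, hAi a ha]

/-- The key combinatorial lemma: if every generator of `I` has exponent exactly `1` on the
(distinct) variables `e0`, `e1`, and `X e0 * f, X e1 * f ∈ I ^ (t+1)`, then `f ∈ I ^ (t+1)`. -/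
lemma key (A : Set (Fin n →₀ ℕ)) {e0 e1 : Fin n} (hne : e0 ≠ e1)
    (h0A : ∀ a ∈ A, a e0 = 1) (h1A : ∀ a ∈ A, a e1 = 1) (t : ℕ)
    (f : MvPolynomial (Fin n) K)
    (h0 : X e0 * f ∈
      (Ideal.span ((fun a => (monomial a (1 : K) : MvPolynomial (Fin n) K)) '' A)) ^ (t + 1))
    (h1 : X e1 * f ∈
      (Ideal.span ((fun a => (monomial a (1 : K) : MvPolynomial (Fin n) K)) '' A)) ^ (t + 1)) :
    f ∈ (Ideal.span ((fun a => (monomial a (1 : K) : MvPolynomial (Fin n) K)) '' A)) ^ (t + 1) := by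
  rw [span_pow, mem_ideal_span_monomial_image] at h0 h1 ⊢
  intro d hd
  have hd0 : Finsupp.single e0 1 + d ∈ (X e0 * f).support := by
    rw [mem_support_iff, coeff_X_mul]; exact mem_support_iff.mp hd
  have hd1 : Finsupp.single e1 1 + d ∈ (X e1 * f).support := by
    rw [mem_support_iff, coeff_X_mul]; exact mem_support_iff.mp hd
  obtain ⟨b, hbA, hb⟩ := h0 _ hd0
  obtain ⟨c, hcA, hc⟩ := h1 _ hd1
  refine ⟨b, hbA, ?_⟩
  have hb1 : b e1 = t + 1 := sumPow_coord A e1 h1A t b hbA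
  have hb0 : b e0 = t + 1 := sumPow_coord A e0 h0A t b hbA
  have hc0 : c e0 = t + 1 := sumPow_coord A e0 h0A t c hcA
  rw [Finsupp.le_def]
  intro i
  have hbi := Finsupp.le_def.mp hb i
  have hci := Finsupp.le_def.mp hc i
  rw [Finsupp.add_apply, Finsupp.single_apply] at hbi hci
  by_cases h0i : e0 = i
  · subst h0i
    rw [if_neg (Ne.symm hne)] at hci
    omega
  · rw [if_neg h0i] at hbi
    by_cases h1i : e1 = i
    · subst h1i
      omega
    · rw [if_neg h1i] at hci
      omega

end Stmt9Aux

/-- The set `{(x_1), (x_2), (x_1, x_2)}` is not `Ass^∞(I)` for any squarefree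
monomial ideal `I` of `S = K[x_1, ..., x_n]` (`n ≥ 2`). -/
theorem stmt9 {K : Type*} [Field K] (n : ℕ) (hn : 2 ≤ n) :
    ¬ ∃ I : Ideal (MvPolynomial (Fin n) K), IsSquarefreeMonomialIdeal I ∧
      ∃ s₀ : ℕ, ∀ s ≥ s₀,
        associatedPrimes (MvPolynomial (Fin n) K) (MvPolynomial (Fin n) K ⧸ I ^ s) =
          ({Ideal.span {X (⟨0, by omega⟩ : Fin n)},
            Ideal.span {X (⟨1, by omega⟩ : Fin n)},
            Ideal.span {X (⟨0, by omega⟩ : Fin n), X (⟨1, by omega⟩ : Fin n)}} :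
              Set (Ideal (MvPolynomial (Fin n) K))) := by
  rintro ⟨I, ⟨A, hsf, rfl⟩, s₀, hass⟩
  classical
  set e0 : Fin n := ⟨0, by omega⟩ with he0
  set e1 : Fin n := ⟨1, by omega⟩ with he1
  have hne : e0 ≠ e1 := by
    intro h
    have : (0 : ℕ) = 1 := congrArg Fin.val h
    omega
  set J : Ideal (MvPolynomial (Fin n) K) :=
    Ideal.span ((fun a => (monomial a (1 : K) : MvPolynomial (Fin n) K)) '' A) with hJ
  have hmem := hass (s₀ + 1) (Nat.le_succ _)
  -- I^(s₀+1) annihilates the quotient, so it is contained in every associated prime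
  have hle : ∀ p : Ideal (MvPolynomial (Fin n) K),
      IsAssociatedPrime p (MvPolynomial (Fin n) K ⧸ J ^ (s₀ + 1)) → J ≤ p := by
    rintro p ⟨hp, x, hx⟩
    intro r hr
    have hrs : r ^ (s₀ + 1) ∈ J ^ (s₀ + 1) := Ideal.pow_mem_pow hr _
    have hrp : r ^ (s₀ + 1) ∈ p := by
      rw [hx]; apply Ideal.le_radical; rw [Submodule.mem_colon_singleton, Submodule.mem_bot]
      obtain ⟨y, rfl⟩ := Ideal.Quotient.mk_surjective x
      have : r ^ (s₀ + 1) • Ideal.Quotient.mk (J ^ (s₀ + 1)) y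
          = Ideal.Quotient.mk (J ^ (s₀ + 1)) (r ^ (s₀ + 1) * y) := rfl
      rw [this, Ideal.Quotient.eq_zero_iff_mem]
      exact Ideal.mul_mem_right _ _ hrs
    exact hp.mem_of_pow_mem _ hrp
  -- (x0) and (x1) are associated primes, hence every generator is divisible by x0 and x1
  have h0 : IsAssociatedPrime (Ideal.span {(X e0 : MvPolynomial (Fin n) K)})
      (MvPolynomial (Fin n) K ⧸ J ^ (s₀ + 1)) := by
    rw [← AssociatedPrimes.mem_iff, hmem]; left; rfl
  have h1 : IsAssociatedPrime (Ideal.span {(X e1 : MvPolynomial (Fin n) K)})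
      (MvPolynomial (Fin n) K ⧸ J ^ (s₀ + 1)) := by
    rw [← AssociatedPrimes.mem_iff, hmem]; right; left; rfl
  have h01 : IsAssociatedPrime (Ideal.span {(X e0 : MvPolynomial (Fin n) K), X e1})
      (MvPolynomial (Fin n) K ⧸ J ^ (s₀ + 1)) := by
    rw [← AssociatedPrimes.mem_iff, hmem]; right; right; rfl
  have hcoord : ∀ (e : Fin n), J ≤ Ideal.span {(X e : MvPolynomial (Fin n) K)} →
      ∀ a ∈ A, a e = 1 := by
    intro e hJe a ha
    have hmono : (monomial a (1 : K) : MvPolynomial (Fin n) K) ∈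
        Ideal.span {(X e : MvPolynomial (Fin n) K)} :=
      hJe (Ideal.subset_span ⟨a, ha, rfl⟩)
    have hset : ({(X e : MvPolynomial (Fin n) K)} : Set (MvPolynomial (Fin n) K))
        = (fun b => (monomial b (1 : K) : MvPolynomial (Fin n) K)) '' {Finsupp.single e 1} := by
      simp [X]
    rw [hset, mem_ideal_span_monomial_image] at hmono
    have hsupp : a ∈ (monomial a (1 : K) : MvPolynomial (Fin n) K).support := by
      rw [mem_support_iff, coeff_monomial, if_pos rfl]
      exact one_ne_zero
    obtain ⟨b, hb, hba⟩ := hmono a hsupp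
    rw [Set.mem_singleton_iff] at hb
    subst hb
    have := Finsupp.le_def.mp hba e
    rw [Finsupp.single_eq_same] at this
    have := hsf a ha e
    omega
  have h0A : ∀ a ∈ A, a e0 = 1 := hcoord e0 (hle _ h0)
  have h1A : ∀ a ∈ A, a e1 = 1 := hcoord e1 (hle _ h1)
  -- witness for the associated prime (x0, x1)
  obtain ⟨hp01, x, hx⟩ := isAssociatedPrime_iff.mp h01
  obtain ⟨f, rfl⟩ := Ideal.Quotient.mk_surjective x
  have hXmem : ∀ g ∈ ({(X e0 : MvPolynomial (Fin n) K), X e1} : Set (MvPolynomial (Fin n) K)),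
      g * f ∈ J ^ (s₀ + 1) := by
    intro g hg
    have : g ∈ Ideal.span {(X e0 : MvPolynomial (Fin n) K), X e1} := Ideal.subset_span hg
    rw [hx, Submodule.mem_colon_singleton, Submodule.mem_bot] at this
    have hgf : g • Ideal.Quotient.mk (J ^ (s₀ + 1)) f
        = Ideal.Quotient.mk (J ^ (s₀ + 1)) (g * f) := rfl
    rw [hgf, Ideal.Quotient.eq_zero_iff_mem] at this
    exact this
  have hf0 : X e0 * f ∈ J ^ (s₀ + 1) := hXmem _ (Set.mem_insert _ _)
  have hf1 : X e1 * f ∈ J ^ (s₀ + 1) := hXmem _ (Set.mem_insert_of_mem _ rfl)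
  have hfmem : f ∈ J ^ (s₀ + 1) := Stmt9Aux.key A hne h0A h1A s₀ f hf0 hf1
  have hx0 : Ideal.Quotient.mk (J ^ (s₀ + 1)) f = 0 := Ideal.Quotient.eq_zero_iff_mem.mpr hfmem
  rw [hx0] at hx
  rw [show (⊥ : Submodule (MvPolynomial (Fin n) K) (MvPolynomial (Fin n) K ⧸ J ^ (s₀ + 1))).colon {0} = ⊤ by ext r; simp [Submodule.mem_colon_singleton]] at hx
  exact hp01.ne_top hx
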